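/- Let K be a number field with ring of integers O_K, 𝔫 a nonzero ideal, ψ a primitive multiplicative character of (O_K/𝔫)^×, and r ∈ O_K coprime to 𝔫. Then for an ideal 𝔡 dividing 𝔫, the sum ∑ ψ(a), taken over units a of O_K/𝔫 with a ≡ r (mod 𝔡), is nonzero if and only if 𝔡 = 𝔫; and when 𝔡 = 𝔫 the sum equals ψ(r). -/

import Mathlib

open NumberField

set_option synthInstance.maxHeartbeats 1000000
set_option maxHeartbeats 1000000

/-- For `𝔡 ∣ 𝔫`, the natural map `(𝓞 K ⧸ 𝔫)ˣ →* (𝓞 K ⧸ 𝔡)ˣ`. -/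
noncomputable def unitsMapFactor (K : Type*) [Field K] [NumberField K]
    {𝔫 𝔡 : Ideal (𝓞 K)} (h : 𝔡 ∣ 𝔫) : (𝓞 K ⧸ 𝔫)ˣ →* (𝓞 K ⧸ 𝔡)ˣ :=
  Units.map (Ideal.Quotient.factor (Ideal.le_of_dvd h)).toMonoidHom

/-- `𝔡` is an induced modulus for the character `χ` modulo `𝔫` if `𝔡 ∣ 𝔫` and
`χ(a) = χ(b)` whenever the units `a, b` of `𝓞 K ⧸ 𝔫` satisfy `a ≡ b (mod 𝔡)`. -/
def IsInducedModulus (K : Type*) [Field K] [NumberField K]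
    (𝔫 : Ideal (𝓞 K)) (χ : (𝓞 K ⧸ 𝔫)ˣ →* ℂ) (𝔡 : Ideal (𝓞 K)) : Prop :=
  ∃ h : 𝔡 ∣ 𝔫, ∀ a b : (𝓞 K ⧸ 𝔫)ˣ,
    unitsMapFactor K h a = unitsMapFactor K h b → χ a = χ b

/-- A character modulo `𝔫` is primitive if it has no induced modulus other than
`𝔫` itself. -/
def IsPrimitiveChar (K : Type*) [Field K] [NumberField K]
    (𝔫 : Ideal (𝓞 K)) (χ : (𝓞 K ⧸ 𝔫)ˣ →* ℂ) : Prop :=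
  ∀ 𝔡 : Ideal (𝓞 K), IsInducedModulus K 𝔫 χ 𝔡 → 𝔡 = 𝔫

/-- Let `ψ` be a primitive character modulo the nonzero ideal `𝔫` and `r ∈ 𝓞 K`
coprime to `𝔫`.  For `𝔡 ∣ 𝔫`, the sum `∑ ψ(a)` over units `a` of `𝓞 K ⧸ 𝔫` with
`a ≡ r (mod 𝔡)` is nonzero if and only if `𝔡 = 𝔫`; and if `𝔡 = 𝔫`, the sum
equals `ψ(r)`. -/
theorem primitive_char_sum (K : Type*) [Field K] [NumberField K]
    (𝔫 𝔡 : Ideal (𝓞 K)) (h𝔫 : 𝔫 ≠ ⊥) (h𝔡 : 𝔡 ∣ 𝔫)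
    (ψ : (𝓞 K ⧸ 𝔫)ˣ →* ℂ) (hψ : IsPrimitiveChar K 𝔫 ψ)
    (r : 𝓞 K) (hr : Ideal.span {r} ⊔ 𝔫 = ⊤) :
    ((∑ᶠ (a : (𝓞 K ⧸ 𝔫)ˣ)
        (_ : (unitsMapFactor K h𝔡 a : 𝓞 K ⧸ 𝔡) = Ideal.Quotient.mk 𝔡 r),
          ψ a) ≠ 0 ↔ 𝔡 = 𝔫) ∧
      ∀ u : (𝓞 K ⧸ 𝔫)ˣ, (u : 𝓞 K ⧸ 𝔫) = Ideal.Quotient.mk 𝔫 r → 𝔡 = 𝔫 →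
        (∑ᶠ (a : (𝓞 K ⧸ 𝔫)ˣ)
          (_ : (unitsMapFactor K h𝔡 a : 𝓞 K ⧸ 𝔡) = Ideal.Quotient.mk 𝔡 r),
            ψ a) = ψ u := by
  classical
  letI : Fintype (𝓞 K ⧸ 𝔫) := @Fintype.ofFinite _ (Ideal.finiteQuotientOfFreeOfNeBot 𝔫 h𝔫)
  letI : Fintype (𝓞 K ⧸ 𝔫)ˣ := Fintype.ofFinite _
  set P : (𝓞 K ⧸ 𝔫)ˣ → Prop :=
    fun a => ((unitsMapFactor K h𝔡 a : (𝓞 K ⧸ 𝔡)ˣ) : 𝓞 K ⧸ 𝔡) = Ideal.Quotient.mk 𝔡 r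
    with hP
  set s : Finset (𝓞 K ⧸ 𝔫)ˣ := Finset.univ.filter P with hs
  have hmem : ∀ a, a ∈ s ↔ P a := by intro a; simp [hs]
  have hsum : (∑ᶠ (a) (_ : P a), ψ a) = ∑ a ∈ s, ψ a :=
    finsum_cond_eq_sum_of_cond_iff _ (fun {x} _ => (hmem x).symm)
  -- ψ never vanishes on units
  have hne : ∀ a : (𝓞 K ⧸ 𝔫)ˣ, ψ a ≠ 0 := by
    intro a
    have h1 : ψ a * ψ a⁻¹ = 1 := by rw [← map_mul, mul_inv_cancel, map_one]
    exact left_ne_zero_of_mul_eq_one h1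
  -- invariance of the sum under multiplication by kernel elements
  have key : ∀ t : (𝓞 K ⧸ 𝔫)ˣ, unitsMapFactor K h𝔡 t = 1 →
      ψ t * ∑ a ∈ s, ψ a = ∑ a ∈ s, ψ a := by
    intro t ht
    have hPt : ∀ a, P a → P (t * a) := by
      intro a ha
      have : unitsMapFactor K h𝔡 (t * a) = unitsMapFactor K h𝔡 a := by
        rw [map_mul, ht, one_mul]
      simpa [hP, this] using ha
    have hPt' : ∀ a, P a → P (t⁻¹ * a) := by
      intro a ha
      have ht' : unitsMapFactor K h𝔡 t⁻¹ = 1 := by rw [map_inv, ht, inv_one]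
      have : unitsMapFactor K h𝔡 (t⁻¹ * a) = unitsMapFactor K h𝔡 a := by
        rw [map_mul, ht', one_mul]
      simpa [hP, this] using ha
    rw [Finset.mul_sum]
    simp_rw [← map_mul]
    refine Finset.sum_nbij' (fun x => t * x) (fun x => t⁻¹ * x) ?_ ?_ ?_ ?_ ?_
    · intro a ha; exact (hmem _).mpr (hPt a ((hmem _).mp ha))
    · intro a ha; exact (hmem _).mpr (hPt' a ((hmem _).mp ha))
    · intro a _; simp
    · intro a _; simp
    · intro a _; rfl
  -- if the sum is nonzero, 𝔡 is an induced modulus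
  have main : (∑ a ∈ s, ψ a) ≠ 0 → 𝔡 = 𝔫 := by
    intro hS
    refine hψ 𝔡 ⟨h𝔡, fun a b hab => ?_⟩
    have ht : unitsMapFactor K h𝔡 (b * a⁻¹) = 1 := by
      rw [map_mul, map_inv, hab, mul_inv_cancel]
    have h1 : ψ (b * a⁻¹) = 1 := by
      have := key _ ht
      have h2 : ψ (b * a⁻¹) * ∑ x ∈ s, ψ x = 1 * ∑ x ∈ s, ψ x := by
        rw [this, one_mul]
      exact mul_right_cancel₀ hS h2
    calc ψ a = ψ (b * a⁻¹) * ψ a := by rw [h1, one_mul]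
    _ = ψ (b * a⁻¹ * a) := (map_mul ψ _ _).symm
    _ = ψ b := by rw [mul_assoc, inv_mul_cancel, mul_one]
  -- `mk 𝔫 r` is a unit
  have h1mem : (1 : 𝓞 K) ∈ Ideal.span {r} ⊔ 𝔫 := hr ▸ Submodule.mem_top
  obtain ⟨x, hx, y, hy, hxy⟩ := Submodule.mem_sup.mp h1mem
  obtain ⟨c, rfl⟩ := Ideal.mem_span_singleton'.mp hx
  have hunit : IsUnit (Ideal.Quotient.mk 𝔫 r) := by
    refine IsUnit.of_mul_eq_one (Ideal.Quotient.mk 𝔫 c) ?_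
    have : Ideal.Quotient.mk 𝔫 (r * c) = Ideal.Quotient.mk 𝔫 1 := by
      rw [Ideal.Quotient.eq]
      have : r * c - 1 = -y := by rw [← hxy]; ring
      rw [this]
      exact 𝔫.neg_mem hy
    rw [← map_mul, this, map_one]
  -- evaluation of the sum when 𝔡 = 𝔫
  have heval : ∀ u : (𝓞 K ⧸ 𝔫)ˣ, (u : 𝓞 K ⧸ 𝔫) = Ideal.Quotient.mk 𝔫 r → 𝔡 = 𝔫 →
      (∑ a ∈ s, ψ a) = ψ u := by
    intro u hu heq
    have hinj : Function.Injective (Ideal.Quotient.factor (Ideal.le_of_dvd h𝔡)) := by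
      intro y z hyz
      obtain ⟨a, rfl⟩ := Ideal.Quotient.mk_surjective y
      obtain ⟨b, rfl⟩ := Ideal.Quotient.mk_surjective z
      rw [Ideal.Quotient.factor_mk, Ideal.Quotient.factor_mk, Ideal.Quotient.eq] at hyz
      exact Ideal.Quotient.eq.mpr (heq ▸ hyz)
    have hPu : P u := by
      show ((unitsMapFactor K h𝔡 u : (𝓞 K ⧸ 𝔡)ˣ) : 𝓞 K ⧸ 𝔡) = Ideal.Quotient.mk 𝔡 r
      show Ideal.Quotient.factor (Ideal.le_of_dvd h𝔡) (u : 𝓞 K ⧸ 𝔫)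
        = Ideal.Quotient.mk 𝔡 r
      rw [hu, Ideal.Quotient.factor_mk]
    have hsu : s = {u} := by
      apply Finset.eq_singleton_iff_unique_mem.mpr
      refine ⟨(hmem u).mpr hPu, fun a ha => ?_⟩
      have hPa : P a := (hmem a).mp ha
      apply Units.ext
      apply hinj
      have : Ideal.Quotient.factor (Ideal.le_of_dvd h𝔡) (a : 𝓞 K ⧸ 𝔫)
          = Ideal.Quotient.factor (Ideal.le_of_dvd h𝔡) (u : 𝓞 K ⧸ 𝔫) := by
        show _ = _
        rw [show Ideal.Quotient.factor (Ideal.le_of_dvd h𝔡) (a : 𝓞 K ⧸ 𝔫)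
            = ((unitsMapFactor K h𝔡 a : (𝓞 K ⧸ 𝔡)ˣ) : 𝓞 K ⧸ 𝔡) from rfl, hPa]
        rw [show Ideal.Quotient.factor (Ideal.le_of_dvd h𝔡) (u : 𝓞 K ⧸ 𝔫)
            = ((unitsMapFactor K h𝔡 u : (𝓞 K ⧸ 𝔡)ˣ) : 𝓞 K ⧸ 𝔡) from rfl, hPu]
      exact this
    rw [hsu, Finset.sum_singleton]
  constructor
  · constructor
    · intro hS
      exact main (by rwa [hsum] at hS)
    · intro heq
      rw [hsum, heval hunit.unit hunit.unit_spec heq]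
      exact hne _
  · intro u hu heq
    rw [hsum]
    exact heval u hu heq
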